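/- Let S be a measurable subset of ℝ^m with finite Lebesgue measure, and let f : ℝ^m → ℝ^n be a map that is Lipschitz with constant L ≥ 0 and differentiable at every point of S. Then the Riemann volume of the image of S under f, computed as the integral over S of the square root of the absolute value of the determinant of J_f(s)ᵀ J_f(s) (where J_f(s) is the Jacobian matrix of f at s), is at most L^m times the Lebesgue measure of S; that is, ∫_S √|det(J_f(s)ᵀ J_f(s))| ds ≤ L^m · ∫_S ds. -/

import Mathlib

open MeasureTheory Matrix

/-- The Jacobian matrix of `f : ℝ^m → ℝ^n` at a point `s`: the `n × m` matrix of the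
Fréchet derivative of `f` at `s`, with respect to the standard orthonormal bases. -/
noncomputable def jacobianMatrix {m n : ℕ}
    (f : EuclideanSpace ℝ (Fin m) → EuclideanSpace ℝ (Fin n))
    (s : EuclideanSpace ℝ (Fin m)) : Matrix (Fin n) (Fin m) ℝ :=
  LinearMap.toMatrix (EuclideanSpace.basisFun (Fin m) ℝ).toBasis
    (EuclideanSpace.basisFun (Fin n) ℝ).toBasis (fderiv ℝ f s).toLinearMap

/-- Pointwise bound: if the operator norm of a continuous linear map `D` is at most `L`,
then `√|det (Jᵀ J)| ≤ L ^ m` where `J` is the matrix of `D`. -/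
lemma sqrt_det_le_of_opNorm_le {m n : ℕ}
    (D : EuclideanSpace ℝ (Fin m) →L[ℝ] EuclideanSpace ℝ (Fin n)) (L : ℝ) (hL : 0 ≤ L)
    (hD : ‖D‖ ≤ L) :
    Real.sqrt |((LinearMap.toMatrix (EuclideanSpace.basisFun (Fin m) ℝ).toBasis
        (EuclideanSpace.basisFun (Fin n) ℝ).toBasis D.toLinearMap)ᵀ *
      LinearMap.toMatrix (EuclideanSpace.basisFun (Fin m) ℝ).toBasis
        (EuclideanSpace.basisFun (Fin n) ℝ).toBasis D.toLinearMap).det| ≤ L ^ m := by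
  set J : Matrix (Fin n) (Fin m) ℝ :=
    LinearMap.toMatrix (EuclideanSpace.basisFun (Fin m) ℝ).toBasis
      (EuclideanSpace.basisFun (Fin n) ℝ).toBasis D.toLinearMap with hJ
  have hmul : ∀ v : EuclideanSpace ℝ (Fin m), J *ᵥ (v : Fin m → ℝ) = (D v : Fin n → ℝ) := by
    intro v
    have hrepr : ((EuclideanSpace.basisFun (Fin m) ℝ).toBasis.repr v : Fin m → ℝ)
        = (v : Fin m → ℝ) := by
      funext i; simp
    have := LinearMap.toMatrix_mulVec_repr (EuclideanSpace.basisFun (Fin m) ℝ).toBasis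
      (EuclideanSpace.basisFun (Fin n) ℝ).toBasis D.toLinearMap v
    rw [hrepr] at this
    rw [← hJ] at this
    rw [this]
    funext j; simp
  have hherm : (Jᵀ * J).IsHermitian := by
    have := Matrix.isHermitian_conjTranspose_mul_self J
    rwa [Matrix.conjTranspose_eq_transpose_of_trivial] at this
  have hpsd : (Jᵀ * J).PosSemidef := by
    have := Matrix.posSemidef_conjTranspose_mul_self J
    rwa [Matrix.conjTranspose_eq_transpose_of_trivial] at this
  -- every eigenvalue is at most L ^ 2
  have heig : ∀ i, hherm.eigenvalues i ≤ L ^ 2 := by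
    intro i
    set v : EuclideanSpace ℝ (Fin m) := hherm.eigenvectorBasis i with hv
    have hnv : ‖v‖ = 1 := hherm.eigenvectorBasis.orthonormal.1 i
    have h1 : hherm.eigenvalues i
        = dotProduct (star (v : Fin m → ℝ)) ((Jᵀ * J) *ᵥ (v : Fin m → ℝ)) := by
      simpa using hherm.eigenvalues_eq i
    have h2 : (Jᵀ * J) *ᵥ (v : Fin m → ℝ) = Jᵀ *ᵥ (J *ᵥ (v : Fin m → ℝ)) := by
      rw [Matrix.mulVec_mulVec]
    have h3 : dotProduct (star (v : Fin m → ℝ)) (Jᵀ *ᵥ (J *ᵥ (v : Fin m → ℝ)))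
        = dotProduct (J *ᵥ (v : Fin m → ℝ)) (J *ᵥ (v : Fin m → ℝ)) := by
      rw [star_trivial, Matrix.dotProduct_mulVec, Matrix.vecMul_transpose]
    have h4 : dotProduct ((D v : Fin n → ℝ)) ((D v : Fin n → ℝ)) = ‖D v‖ ^ 2 := by
      rw [← real_inner_self_eq_norm_sq]
      simp only [dotProduct, PiLp.inner_apply, RCLike.inner_apply, conj_trivial, mul_comm]
    have h5 : ‖D v‖ ^ 2 ≤ L ^ 2 := by
      have : ‖D v‖ ≤ L := by
        calc ‖D v‖ ≤ ‖D‖ * ‖v‖ := D.le_opNorm v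
        _ ≤ L := by rw [hnv, mul_one]; exact hD
      exact pow_le_pow_left₀ (norm_nonneg _) this 2
    rw [h1, h2, h3, hmul v, h4]
    exact h5
  have hdet : (Jᵀ * J).det ≤ (L ^ m) ^ 2 := by
    have := hherm.det_eq_prod_eigenvalues
    rw [this]
    have : (L ^ m) ^ 2 = ∏ _i : Fin m, L ^ 2 := by
      rw [Finset.prod_const, Finset.card_univ, Fintype.card_fin, ← pow_mul, ← pow_mul,
        mul_comm]
    rw [this]
    exact Finset.prod_le_prod (fun i _ => hpsd.eigenvalues_nonneg i) (fun i _ => heig i)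
  have hdet0 : 0 ≤ (Jᵀ * J).det := by
    rw [hherm.det_eq_prod_eigenvalues]
    exact Finset.prod_nonneg fun i _ => hpsd.eigenvalues_nonneg i
  rw [abs_of_nonneg hdet0]
  calc Real.sqrt (Jᵀ * J).det ≤ Real.sqrt ((L ^ m) ^ 2) := Real.sqrt_le_sqrt hdet
  _ = L ^ m := Real.sqrt_sq (pow_nonneg hL m)

/-- If `S ⊆ ℝ^m` is measurable with finite Lebesgue measure and `f : ℝ^m → ℝ^n` is
`L`-Lipschitz and differentiable at every point of `S`, then the Riemann volume
`∫_S √|det(J_f(s)ᵀ J_f(s))| ds` is at most `L^m` times the Lebesgue measure of `S`. -/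
theorem riemann_volume_le_of_lipschitz {m n : ℕ}
    (S : Set (EuclideanSpace ℝ (Fin m))) (hS : MeasurableSet S) (hSfin : volume S < ⊤)
    (f : EuclideanSpace ℝ (Fin m) → EuclideanSpace ℝ (Fin n))
    (L : ℝ) (hL : 0 ≤ L)
    (hLip : ∀ x y, dist (f x) (f y) ≤ L * dist x y)
    (hdiff : ∀ s ∈ S, DifferentiableAt ℝ f s) :
    ∫ s in S, Real.sqrt |((jacobianMatrix f s)ᵀ * jacobianMatrix f s).det|
      ≤ L ^ m * (volume S).toReal := by
  have hLip' : LipschitzWith (Real.toNNReal L) f := by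
    rw [lipschitzWith_iff_dist_le_mul]
    intro x y
    simpa [Real.coe_toNNReal L hL] using hLip x y
  have hbound : ∀ s ∈ S,
      ‖Real.sqrt |((jacobianMatrix f s)ᵀ * jacobianMatrix f s).det|‖ ≤ L ^ m := by
    intro s _
    rw [Real.norm_eq_abs, abs_of_nonneg (Real.sqrt_nonneg _)]
    have hDnorm : ‖fderiv ℝ f s‖ ≤ L := by
      have := norm_fderiv_le_of_lipschitz ℝ (x₀ := s) hLip'
      simpa [Real.coe_toNNReal L hL] using this
    exact sqrt_det_le_of_opNorm_le (fderiv ℝ f s) L hL hDnorm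
  calc ∫ s in S, Real.sqrt |((jacobianMatrix f s)ᵀ * jacobianMatrix f s).det|
      ≤ ‖∫ s in S, Real.sqrt |((jacobianMatrix f s)ᵀ * jacobianMatrix f s).det|‖ :=
        le_abs_self _
  _ ≤ L ^ m * (volume S).toReal :=
      norm_setIntegral_le_of_norm_le_const hSfin hbound
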